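/- Fix a real L with 0 < L < 1 and reals y_0, y_1 with y_0 < y_1 < log(1/L − 1), and fix any y < y_1. Let Y_1, …, Y_n be reals with y_0 ≤ Y_i ≤ y_1, set m_1 = (1/n)·Σ Y_i, m_2 = (1/n)·Σ Y_i², and s = sqrt(m_2 − m_1²). Let a_1, b_1, c_1 be the quadratic coefficients determined by L, y and y_1; then a_1 > 0, and if the radicand −m_1² + ((1 − b_1)/a_1)·m_1 − c_1/a_1 is nonnegative and s ≤ sqrt( −m_1² + ((1 − b_1)/a_1)·m_1 − c_1/a_1 ), then Σ_{i=1}^n log(1 + L·(e^{Y_i} − 1)) ≤ Σ_{i=1}^n Y_i; that is, the log-return of the L-times leveraged index (equivalently, of a portfolio rebalanced each period to hold fraction L in the benchmark and 1 − L in cash) is at most the log-return of the benchmark index. -/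

import Mathlib

set_option maxHeartbeats 1000000
open Set

noncomputable def Pf (L t : ℝ) : ℝ := 1 + L * (Real.exp t - 1)
noncomputable def f0 (L t : ℝ) : ℝ := Real.log (Pf L t)
noncomputable def f1 (L t : ℝ) : ℝ := L * Real.exp t / Pf L t
noncomputable def f2 (L t : ℝ) : ℝ := L * (1 - L) * Real.exp t / (Pf L t) ^ 2
noncomputable def f3 (L t : ℝ) : ℝ :=
  L * (1 - L) * Real.exp t * (1 - L - L * Real.exp t) / (Pf L t) ^ 3

lemma hPpos {L : ℝ} (hL0 : 0 < L) (hL1 : L < 1) (t : ℝ) : 0 < Pf L t := by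
  have := Real.exp_pos t; unfold Pf; nlinarith

lemma hdP (L t : ℝ) : HasDerivAt (Pf L) (L * Real.exp t) t := by
  exact (((Real.hasDerivAt_exp t).sub_const 1).const_mul L).const_add 1

lemma hdf0 {L : ℝ} (hL0 : 0 < L) (hL1 : L < 1) (t : ℝ) : HasDerivAt (f0 L) (f1 L t) t :=
  (hdP L t).log (hPpos hL0 hL1 t).ne'

lemma hdf1 {L : ℝ} (hL0 : 0 < L) (hL1 : L < 1) (t : ℝ) : HasDerivAt (f1 L) (f2 L t) t := by
  have h := ((Real.hasDerivAt_exp t).const_mul L).div (hdP L t) (hPpos hL0 hL1 t).ne'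
  refine h.congr_deriv ?_
  have hne := (hPpos hL0 hL1 t).ne'
  unfold f2 Pf at *
  field_simp
  ring

lemma hdf2 {L : ℝ} (hL0 : 0 < L) (hL1 : L < 1) (t : ℝ) : HasDerivAt (f2 L) (f3 L t) t := by
  have hden : HasDerivAt (fun t => (Pf L t) ^ 2) (2 * (Pf L t) ^ 1 * (L * Real.exp t)) t :=
    (hdP L t).pow 2
  have h := ((Real.hasDerivAt_exp t).const_mul (L * (1 - L))).div hden
    (pow_ne_zero 2 (hPpos hL0 hL1 t).ne')
  refine h.congr_deriv ?_
  have hne := (hPpos hL0 hL1 t).ne'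
  unfold f3 Pf at *
  field_simp
  ring


lemma f2pos {L : ℝ} (hL0 : 0 < L) (hL1 : L < 1) (t : ℝ) : 0 < f2 L t := by
  unfold f2
  exact div_pos (mul_pos (mul_pos hL0 (by linarith)) (Real.exp_pos t))
    (pow_pos (hPpos hL0 hL1 t) 2)

lemma f3pos {L : ℝ} (hL0 : 0 < L) (hL1 : L < 1) (t : ℝ)
    (ht : t < Real.log (1 / L - 1)) : 0 < f3 L t := by
  unfold f3
  have h1 : (1:ℝ) < 1 / L := (one_lt_one_div hL0 hL1)
  have h2 : (0:ℝ) < 1 / L - 1 := by linarith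
  have h3 : Real.exp t < 1 / L - 1 := by
    calc Real.exp t < Real.exp (Real.log (1 / L - 1)) := Real.exp_lt_exp.2 ht
    _ = 1 / L - 1 := Real.exp_log h2
  have h4 : L * Real.exp t < L * (1 / L - 1) := by
    exact mul_lt_mul_of_pos_left h3 hL0
  have h5 : L * (1 / L - 1) = 1 - L := by field_simp
  have h6 : 0 < 1 - L - L * Real.exp t := by rw [h5] at h4; linarith
  exact div_pos (mul_pos (mul_pos (mul_pos hL0 (by linarith)) (Real.exp_pos t)) h6)
    (pow_pos (hPpos hL0 hL1 t) 3)

theorem key (L y1 y a b c : ℝ) (hL0 : 0 < L) (hL1 : L < 1)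
    (h1 : y1 < Real.log (1 / L - 1)) (hy : y < y1)
    (ha : a = (1 / (y - y1)) *
      (Real.log ((1 + L * (Real.exp y1 - 1)) / (1 + L * (Real.exp y - 1))) / (y - y1)
        + L * Real.exp y / (1 + L * (Real.exp y - 1))))
    (hb : b = L * Real.exp y / (1 + L * (Real.exp y - 1)) - 2 * a * y)
    (hc : c = Real.log (1 + L * (Real.exp y1 - 1)) - a * y1 ^ 2 - b * y1) :
    0 < a ∧ ∀ t, t ≤ y1 → Real.log (1 + L * (Real.exp t - 1)) ≤ a * t ^ 2 + b * t + c := by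
  have hyne : y - y1 ≠ 0 := by linarith
  -- rewrite hypotheses in terms of f0, f1
  have hlogdiv : Real.log ((1 + L * (Real.exp y1 - 1)) / (1 + L * (Real.exp y - 1)))
      = f0 L y1 - f0 L y := by
    unfold f0 Pf
    exact Real.log_div (hPpos hL0 hL1 y1).ne' (hPpos hL0 hL1 y).ne'
  have hb' : b = f1 L y - 2 * a * y := by rw [hb]; rfl
  have hc' : c = f0 L y1 - a * y1 ^ 2 - b * y1 := by rw [hc]; rfl
  have e1 : a * (y - y1) ^ 2 = f0 L y1 - f0 L y - f1 L y * (y1 - y) := by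
    rw [ha, hlogdiv]
    rw [show L * Real.exp y / (1 + L * (Real.exp y - 1)) = f1 L y from rfl]
    field_simp
    ring
  -- strict monotonicity of f1
  have hf1mono : StrictMono (f1 L) :=
    strictMono_of_deriv_pos (fun x => by rw [(hdf1 hL0 hL1 x).deriv]; exact f2pos hL0 hL1 x)
  -- a > 0 via F t = f0 t - f1 y * t
  have hapos : 0 < a := by
    set F : ℝ → ℝ := fun t => f0 L t - f1 L y * t with hF
    have hdF : ∀ t, HasDerivAt F (f1 L t - f1 L y) t := fun t => by
      exact ((hdf0 hL0 hL1 t).sub ((hasDerivAt_id t).const_mul (f1 L y))).congr_deriv (by ring)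
    have hmono : StrictMonoOn F (Ici y) := by
      apply strictMonoOn_of_deriv_pos (convex_Ici y)
        (fun x _ => (hdF x).continuousAt.continuousWithinAt)
      intro x hx
      rw [interior_Ici] at hx
      rw [(hdF x).deriv]
      have := hf1mono hx
      linarith
    have hFlt : F y < F y1 := hmono (self_mem_Ici) (le_of_lt hy) hy
    have : 0 < a * (y - y1) ^ 2 := by
      rw [e1]; simp only [hF] at hFlt; nlinarith
    nlinarith [sq_nonneg (y - y1), sq_abs (y - y1)]
  refine ⟨hapos, ?_⟩
  -- define g and G1
  set g : ℝ → ℝ := fun t => a * t ^ 2 + b * t + c - f0 L t with hgdef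
  set G1 : ℝ → ℝ := fun t => 2 * a * t + b - f1 L t with hG1def
  have hdg : ∀ t, HasDerivAt g (G1 t) t := by
    intro t
    have hpoly : HasDerivAt (fun t => a * t ^ 2 + b * t + c) (2 * a * t + b) t := by
      have h := (((hasDerivAt_pow 2 t).const_mul a).add ((hasDerivAt_id t).const_mul b)).add_const c
      exact h.congr_deriv (by simp; ring)
    exact hpoly.sub (hdf0 hL0 hL1 t)
  have hgy1 : g y1 = 0 := by simp only [hgdef]; rw [hc']; ring
  have hG1y : G1 y = 0 := by simp only [hG1def]; rw [hb']; ring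
  have hgy : g y = 0 := by
    simp only [hgdef]; rw [hc', hb']; linear_combination -e1
  -- strict concavity of G1 on Iic y1
  have hdG1 : ∀ t, HasDerivAt G1 (2 * a - f2 L t) t := fun t => by
    have h := (((hasDerivAt_id t).const_mul (2 * a)).add_const b).sub (hdf1 hL0 hL1 t)
    exact h.congr_deriv (by ring)
  have hderivG1 : deriv G1 = fun t => 2 * a - f2 L t := funext fun t => (hdG1 t).deriv
  have hconc : StrictConcaveOn ℝ (Iic y1) G1 := by
    apply strictConcaveOn_of_deriv2_neg (convex_Iic y1)
      (fun x _ => (hdG1 x).continuousAt.continuousWithinAt)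
    intro x hx
    rw [interior_Iic] at hx
    have hx' : x < Real.log (1 / L - 1) := lt_trans hx h1
    have : deriv^[2] G1 x = deriv (deriv G1) x := rfl
    rw [this, hderivG1]
    have hd : HasDerivAt (fun t => 2 * a - f2 L t) (0 - f3 L x) x :=
      (hasDerivAt_const x (2 * a)).sub (hdf2 hL0 hL1 x)
    rw [hd.deriv]
    have := f3pos hL0 hL1 x hx'
    linarith
  -- Rolle
  obtain ⟨z, hz, hG1z⟩ := exists_hasDerivAt_eq_zero hy
    (fun x _ => (hdg x).continuousAt.continuousWithinAt) (hgy.trans hgy1.symm)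
    (fun x _ => hdg x)
  obtain ⟨hyz, hzy1⟩ := hz
  -- sign of G1
  have hpos : ∀ t, y < t → t < z → 0 < G1 t := by
    intro t h1t h2t
    have hzy : z - y ≠ 0 := by linarith
    have hw1 : 0 < (z - t)/(z - y) := div_pos (by linarith) (by linarith)
    have hw2 : 0 < (t - y)/(z - y) := div_pos (by linarith) (by linarith)
    have hw3 : (z - t)/(z - y) + (t - y)/(z - y) = 1 := by field_simp; ring
    have key := hconc.2 (show y ∈ Iic y1 from le_of_lt hy)
      (show z ∈ Iic y1 from le_of_lt hzy1) (by linarith : y ≠ z) hw1 hw2 hw3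
    rw [smul_eq_mul, smul_eq_mul, smul_eq_mul, smul_eq_mul] at key
    rw [show (z - t)/(z - y) * y + (t - y)/(z - y) * z = t by field_simp; ring] at key
    rw [hG1y, hG1z] at key
    simp only [mul_zero, add_zero, zero_add] at key
    linarith
  have hnegl : ∀ t, t < y → G1 t < 0 := by
    intro t ht
    have hzt : z - t ≠ 0 := by linarith
    have hw1 : 0 < (z - y)/(z - t) := div_pos (by linarith) (by linarith)
    have hw2 : 0 < (y - t)/(z - t) := div_pos (by linarith) (by linarith)
    have hw3 : (z - y)/(z - t) + (y - t)/(z - t) = 1 := by field_simp; ring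
    have key := hconc.2 (show t ∈ Iic y1 by simp; linarith)
      (show z ∈ Iic y1 from le_of_lt hzy1) (by linarith : t ≠ z) hw1 hw2 hw3
    rw [smul_eq_mul, smul_eq_mul, smul_eq_mul, smul_eq_mul] at key
    rw [show (z - y)/(z - t) * t + (y - t)/(z - t) * z = y by field_simp; ring] at key
    rw [hG1y, hG1z] at key
    simp only [mul_zero, add_zero, zero_add] at key
    have hcoef : 0 < (z - y)/(z - t) := div_pos (by linarith) (by linarith)
    by_contra hcon
    have hge : 0 ≤ G1 t := not_lt.1 hcon
    have := mul_nonneg hcoef.le hge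
    linarith
  have hnegr : ∀ t, z < t → t ≤ y1 → G1 t < 0 := by
    intro t ht hty1
    have hty : t - y ≠ 0 := by linarith
    have hw1 : 0 < (t - z)/(t - y) := div_pos (by linarith) (by linarith)
    have hw2 : 0 < (z - y)/(t - y) := div_pos (by linarith) (by linarith)
    have hw3 : (t - z)/(t - y) + (z - y)/(t - y) = 1 := by field_simp; ring
    have key := hconc.2 (show y ∈ Iic y1 from le_of_lt hy)
      (show t ∈ Iic y1 from hty1) (by linarith : y ≠ t) hw1 hw2 hw3
    rw [smul_eq_mul, smul_eq_mul, smul_eq_mul, smul_eq_mul] at key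
    rw [show (t - z)/(t - y) * y + (z - y)/(t - y) * t = z by field_simp; ring] at key
    rw [hG1y, hG1z] at key
    simp only [mul_zero, add_zero, zero_add] at key
    have hcoef : 0 < (z - y)/(t - y) := div_pos (by linarith) (by linarith)
    by_contra hcon
    have hge : 0 ≤ G1 t := not_lt.1 hcon
    have := mul_nonneg hcoef.le hge
    linarith
  -- g ≥ 0 on Iic y1
  have hmain : ∀ t, t ≤ y1 → 0 ≤ g t := by
    intro t ht
    rcases le_or_gt t y with hty | hty
    · have hanti : AntitoneOn g (Icc t y) := by
        apply antitoneOn_of_deriv_nonpos (convex_Icc t y)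
          (fun x _ => (hdg x).continuousAt.continuousWithinAt)
          (fun x hx => (hdg x).differentiableAt.differentiableWithinAt)
        intro x hx
        rw [interior_Icc] at hx
        rw [(hdg x).deriv]
        exact le_of_lt (hnegl x hx.2)
      have := hanti (left_mem_Icc.2 hty) (right_mem_Icc.2 hty) hty
      rw [hgy] at this; linarith
    · rcases le_or_gt t z with htz | htz
      · have hmono : MonotoneOn g (Icc y z) := by
          apply monotoneOn_of_deriv_nonneg (convex_Icc y z)
            (fun x _ => (hdg x).continuousAt.continuousWithinAt)
            (fun x hx => (hdg x).differentiableAt.differentiableWithinAt)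
          intro x hx
          rw [interior_Icc] at hx
          rw [(hdg x).deriv]
          exact le_of_lt (hpos x hx.1 hx.2)
        have hyz' : y ≤ z := le_of_lt hyz
        have := hmono (left_mem_Icc.2 hyz') ⟨le_of_lt hty, htz⟩ (le_of_lt hty)
        rw [hgy] at this; linarith
      · have hanti : AntitoneOn g (Icc z y1) := by
          apply antitoneOn_of_deriv_nonpos (convex_Icc z y1)
            (fun x _ => (hdg x).continuousAt.continuousWithinAt)
            (fun x hx => (hdg x).differentiableAt.differentiableWithinAt)
          intro x hx
          rw [interior_Icc] at hx
          rw [(hdg x).deriv]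
          exact le_of_lt (hnegr x hx.1 (le_of_lt hx.2))
        have := hanti ⟨le_of_lt htz, ht⟩ (right_mem_Icc.2 (le_of_lt hzy1)) ht
        rw [hgy1] at this; linarith
  intro t ht
  have := hmain t ht
  simp only [hgdef] at this
  unfold f0 Pf at this
  linarith

theorem stmt_19 (L y0 y1 y : ℝ) (hL0 : 0 < L) (hL1 : L < 1)
    (h01 : y0 < y1) (h1 : y1 < Real.log (1 / L - 1)) (hy : y < y1)
    (n : ℕ) (Y : Fin n → ℝ) (hY : ∀ i, y0 ≤ Y i ∧ Y i ≤ y1)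
    (a b c m1 m2 s : ℝ)
    (ha : a = (1 / (y - y1)) *
      (Real.log ((1 + L * (Real.exp y1 - 1)) / (1 + L * (Real.exp y - 1))) / (y - y1)
        + L * Real.exp y / (1 + L * (Real.exp y - 1))))
    (hb : b = L * Real.exp y / (1 + L * (Real.exp y - 1)) - 2 * a * y)
    (hc : c = Real.log (1 + L * (Real.exp y1 - 1)) - a * y1 ^ 2 - b * y1)
    (hm1 : m1 = (1 / (n : ℝ)) * ∑ i, Y i)
    (hm2 : m2 = (1 / (n : ℝ)) * ∑ i, (Y i) ^ 2)
    (hs : s = Real.sqrt (m2 - m1 ^ 2)) :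
    0 < a ∧
    ((0 ≤ -m1 ^ 2 + ((1 - b) / a) * m1 - c / a ∧
        s ≤ Real.sqrt (-m1 ^ 2 + ((1 - b) / a) * m1 - c / a)) →
      ∑ i, Real.log (1 + L * (Real.exp (Y i) - 1)) ≤ ∑ i, Y i) := by
  obtain ⟨hapos, hbound⟩ := key L y1 y a b c hL0 hL1 h1 hy ha hb hc
  refine ⟨hapos, fun ⟨hrad, hsle⟩ => ?_⟩
  rcases Nat.eq_zero_or_pos n with hn | hn
  · subst hn; simp
  have hnR : (0 : ℝ) < n := by exact_mod_cast hn
  have hne : (n : ℝ) ≠ 0 := hnR.ne'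
  have hsum1 : ∑ i, Real.log (1 + L * (Real.exp (Y i) - 1))
      ≤ ∑ i, (a * (Y i) ^ 2 + b * (Y i) + c) :=
    Finset.sum_le_sum fun i _ => hbound (Y i) (hY i).2
  have hS1 : ∑ i, Y i = n * m1 := by rw [hm1]; field_simp
  have hS2 : ∑ i, (Y i) ^ 2 = n * m2 := by rw [hm2]; field_simp
  have hRle : m2 - m1 ^ 2 ≤ -m1 ^ 2 + ((1 - b) / a) * m1 - c / a := by
    rcases le_or_gt 0 (m2 - m1 ^ 2) with h | h
    · calc m2 - m1 ^ 2 = (Real.sqrt (m2 - m1 ^ 2)) ^ 2 := (Real.sq_sqrt h).symm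
        _ ≤ (Real.sqrt (-m1 ^ 2 + ((1 - b) / a) * m1 - c / a)) ^ 2 := by
            apply pow_le_pow_left₀ (Real.sqrt_nonneg _)
            rw [← hs]; exact hsle
        _ = -m1 ^ 2 + ((1 - b) / a) * m1 - c / a := Real.sq_sqrt hrad
    · linarith
  have hm2le : m2 ≤ ((1 - b) / a) * m1 - c / a := by linarith
  have hane : a ≠ 0 := ne_of_gt hapos
  have h6 : a * (((1 - b) / a) * m1 - c / a) = (1 - b) * m1 - c := by field_simp
  have h5 := mul_le_mul_of_nonneg_left hm2le hapos.le
  rw [h6] at h5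
  have hq : a * m2 + b * m1 + c ≤ m1 := by linarith
  have hsum2 : ∑ i, (a * (Y i) ^ 2 + b * (Y i) + c)
      = a * ((n : ℝ) * m2) + b * ((n : ℝ) * m1) + (n : ℝ) * c := by
    rw [Finset.sum_add_distrib, Finset.sum_add_distrib, ← Finset.mul_sum, ← Finset.mul_sum,
      Finset.sum_const, Finset.card_univ, Fintype.card_fin, hS1, hS2, nsmul_eq_mul]
  have hfin : a * ((n : ℝ) * m2) + b * ((n : ℝ) * m1) + (n : ℝ) * c ≤ (n : ℝ) * m1 := by
    nlinarith [mul_le_mul_of_nonneg_left hq hnR.le]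
  rw [hS1]
  linarith [hsum1, hsum2 ▸ hsum1]
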